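/- For every real q with 0 < q < 1 and p = 1 − q, the infinite product satisfies ∏_{i=1}^∞ (1 − q^i)^4 ≥ exp( −(2π²/3) · q/p ). -/

import Mathlib

open Filter Real Finset

private lemma one_sub_pow_ge (q : ℝ) (h0 : 0 ≤ q) (h1 : q ≤ 1) (n : ℕ) :
    ((n : ℝ) + 1) * q ^ n * (1 - q) ≤ 1 - q ^ (n + 1) := by
  have hgeom : (1 - q) * ∑ i ∈ range (n + 1), q ^ i = 1 - q ^ (n + 1) := by
    have := geom_sum_mul q (n + 1)
    nlinarith [this]
  have hsum : ((n : ℝ) + 1) * q ^ n ≤ ∑ i ∈ range (n + 1), q ^ i := by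
    calc ((n : ℝ) + 1) * q ^ n = ∑ _i ∈ range (n + 1), q ^ n := by
          rw [Finset.sum_const, Finset.card_range, nsmul_eq_mul]; push_cast; ring
      _ ≤ ∑ i ∈ range (n + 1), q ^ i :=
          Finset.sum_le_sum fun i hi => pow_le_pow_of_le_one h0 h1
            (Nat.le_of_lt_succ (Finset.mem_range.mp hi))
  nlinarith [hsum, hgeom]

theorem infinite_product_lower_bound (q p : ℝ) (h0 : 0 < q) (h1 : q < 1)
    (hp : p = 1 - q) :
    ∃ L : ℝ,
      Tendsto (fun m : ℕ => ∏ i ∈ Finset.range m, (1 - q ^ (i + 1)) ^ 4) atTop (nhds L) ∧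
      Real.exp (-(2 * Real.pi ^ 2 / 3) * (q / p)) ≤ L := by
  have hp0 : 0 < p := by rw [hp]; linarith
  set f : ℕ → ℝ := fun m => ∏ i ∈ Finset.range m, (1 - q ^ (i + 1)) ^ 4 with hf
  have hqpow : ∀ k : ℕ, q ^ (k + 1) < 1 := fun k => pow_lt_one₀ h0.le h1 (Nat.succ_ne_zero k)
  have hqpow0 : ∀ k : ℕ, 0 < q ^ (k + 1) := fun k => pow_pos h0 _
  have hfpos : ∀ m, 0 < f m := fun m =>
    Finset.prod_pos fun i _ => pow_pos (by linarith [hqpow i]) 4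
  have key : ∀ m : ℕ, Real.exp (-(2 * Real.pi ^ 2 / 3) * (q / p)) ≤ f m := by
    intro m
    have hHS : ∀ i : ℕ, HasSum (fun n : ℕ => (q ^ (i + 1)) ^ (n + 1) / (n + 1))
        (-Real.log (1 - q ^ (i + 1))) := fun i =>
      hasSum_pow_div_log_of_abs_lt_one (by rw [abs_of_pos (hqpow0 i)]; exact hqpow i)
    have hg : HasSum (fun n : ℕ => (q / p) * (1 / ((n : ℝ) + 1) ^ 2)) (q / p * (π ^ 2 / 6)) := by
      have h2 : HasSum (fun n : ℕ => (1 : ℝ) / ((n : ℝ) + 1) ^ 2) (π ^ 2 / 6) := by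
        have h2' := (hasSum_nat_add_iff' (f := fun n : ℕ => (1 : ℝ) / (n : ℝ) ^ 2) 1).mpr
          hasSum_zeta_two
        simpa using h2'
      exact h2.mul_left _
    have hterm : ∀ n : ℕ, ∑ i ∈ Finset.range m, (q ^ (i + 1)) ^ (n + 1) / (n + 1)
        ≤ (q / p) * (1 / ((n : ℝ) + 1) ^ 2) := by
      intro n
      set r : ℝ := q ^ (n + 1) with hr
      have hr0 : 0 < r := hqpow0 n
      have hr1 : r < 1 := hqpow n
      have hrearr : ∀ i : ℕ, (q ^ (i + 1)) ^ (n + 1) = r ^ (i + 1) := fun i => by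
        rw [hr, ← pow_mul, ← pow_mul, Nat.mul_comm]
      have hsum_r : ∑ i ∈ Finset.range m, r ^ (i + 1) ≤ r / (1 - r) := by
        have hgs : ∑ i ∈ Finset.range m, r ^ (i + 1) = r * ∑ i ∈ Finset.range m, r ^ i := by
          rw [Finset.mul_sum]; exact Finset.sum_congr rfl fun i _ => by ring
        have hle : ∑ i ∈ Finset.range m, r ^ i ≤ (1 - r)⁻¹ := by
          have := Summable.sum_le_tsum (Finset.range m) (fun i _ => (pow_pos hr0 i).le)
            (summable_geometric_of_lt_one hr0.le hr1)
          rwa [tsum_geometric_of_lt_one hr0.le hr1] at this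
        rw [hgs, div_eq_mul_inv]
        exact mul_le_mul_of_nonneg_left hle hr0.le
      have hlow : ((n : ℝ) + 1) * q ^ n * p ≤ 1 - r := by
        rw [hp, hr]; exact one_sub_pow_ge q h0.le h1.le n
      have hfrac : r / (1 - r) ≤ q / (((n : ℝ) + 1) * p) := by
        rw [div_le_div_iff₀ (by linarith) (by positivity)]
        have hre : r = q ^ n * q := by rw [hr, pow_succ]
        calc r * (((n : ℝ) + 1) * p) = q * (((n : ℝ) + 1) * q ^ n * p) := by rw [hre]; ring
          _ ≤ q * (1 - r) := mul_le_mul_of_nonneg_left hlow h0.le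
      have hn1 : (0 : ℝ) < (n : ℝ) + 1 := by positivity
      calc ∑ i ∈ Finset.range m, (q ^ (i + 1)) ^ (n + 1) / (n + 1)
          = (∑ i ∈ Finset.range m, r ^ (i + 1)) / ((n : ℝ) + 1) := by
            rw [Finset.sum_div]; exact Finset.sum_congr rfl fun i _ => by rw [hrearr i]
        _ ≤ (r / (1 - r)) / ((n : ℝ) + 1) := by gcongr
        _ ≤ (q / (((n : ℝ) + 1) * p)) / ((n : ℝ) + 1) := by gcongr
        _ = (q / p) * (1 / ((n : ℝ) + 1) ^ 2) := by
            rw [div_div, div_mul_div_comm]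
            rw [mul_one]
            congr 1
            ring
    -- summability of the swapped sum
    have hsummand : ∀ i ∈ Finset.range m,
        Summable (fun n : ℕ => (q ^ (i + 1)) ^ (n + 1) / (n + 1)) := fun i _ => (hHS i).summable
    have hswap : ∑ i ∈ Finset.range m, (-Real.log (1 - q ^ (i + 1)))
        = ∑' n : ℕ, ∑ i ∈ Finset.range m, (q ^ (i + 1)) ^ (n + 1) / (n + 1) := by
      rw [Summable.tsum_finsetSum hsummand]
      exact Finset.sum_congr rfl fun i _ => ((hHS i).tsum_eq).symm
    have hS : ∑ i ∈ Finset.range m, (-Real.log (1 - q ^ (i + 1))) ≤ q / p * (π ^ 2 / 6) := by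
      rw [hswap, ← hg.tsum_eq]
      refine Summable.tsum_le_tsum hterm ?_ hg.summable
      exact Summable.of_nonneg_of_le
        (fun n => Finset.sum_nonneg fun i _ => by positivity) hterm hg.summable
    have hlog : Real.log (f m) = -(4 * ∑ i ∈ Finset.range m, (-Real.log (1 - q ^ (i + 1)))) := by
      rw [hf]
      rw [Real.log_prod (fun i _ => ne_of_gt (pow_pos (by linarith [hqpow i]) 4))]
      rw [Finset.mul_sum, ← Finset.sum_neg_distrib]
      refine Finset.sum_congr rfl fun i _ => ?_
      rw [Real.log_pow]
      push_cast; ring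
    have : -(2 * Real.pi ^ 2 / 3) * (q / p) ≤ Real.log (f m) := by
      rw [hlog]; nlinarith [hS]
    calc Real.exp (-(2 * Real.pi ^ 2 / 3) * (q / p)) ≤ Real.exp (Real.log (f m)) :=
          Real.exp_le_exp.mpr this
      _ = f m := Real.exp_log (hfpos m)
  -- convergence
  have hanti : Antitone f := antitone_nat_of_succ_le fun n => by
    rw [hf]
    simp only [Finset.prod_range_succ]
    have h4 : (1 - q ^ (n + 1)) ^ 4 ≤ 1 :=
      pow_le_one₀ (by linarith [hqpow n]) (by linarith [hqpow0 n])
    nlinarith [hfpos n, (hfpos n).le, mul_le_mul_of_nonneg_left h4 (hfpos n).le]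
  have hbdd : BddBelow (Set.range f) :=
    ⟨0, by rintro x ⟨n, rfl⟩; exact (hfpos n).le⟩
  refine ⟨⨅ n, f n, tendsto_atTop_ciInf hanti hbdd, le_ciInf key⟩
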